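/- (Lucas' theorem for extended binomial coefficients) Let p be a prime and f : ℕ → ℕ. Let n = ∑_{i=0}^{t} n_i p^i and k = ∑_{j=0}^{r} k_j p^j with 0 ≤ n_i, k_j < p (base-p digit expansions). Then binom(k,n)_f ≡ ∑ ∏_{i=0}^{r} binom(k_i, s_i)_f (mod p), where the sum is over all (r+1)-tuples (s₀,…,s_r) of nonnegative integers satisfying s₀ + s₁·p + ⋯ + s_r·p^r = n. -/

import Mathlib

/-- The extended binomial coefficient `binom(k,n)_f`: the sum, over all
`k`-tuples `(π₁,…,π_k)` of nonnegative integers with `π₁ + ⋯ + π_k = n`,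
of the products `f(π₁)⋯f(π_k)`. It counts the `f`-weighted integer
compositions of `n` with exactly `k` parts. -/
def extBinom (f : ℕ → ℕ) (k n : ℕ) : ℕ :=
  ∑ π ∈ Finset.Nat.antidiagonalTuple k n, ∏ i, f (π i)

open Finset Polynomial

lemma extBinom_zero (f : ℕ → ℕ) (m : ℕ) : extBinom f 0 m = if m = 0 then 1 else 0 := by
  cases m with
  | zero => simp [extBinom]
  | succ m => simp [extBinom, Finset.Nat.antidiagonalTuple_zero_succ]

lemma extBinom_succ (f : ℕ → ℕ) (k m : ℕ) :
    extBinom f (k + 1) m = ∑ ab ∈ Finset.HasAntidiagonal.antidiagonal m, f ab.1 * extBinom f k ab.2 := by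
  unfold extBinom
  simp_rw [Finset.mul_sum]
  rw [Finset.sum_sigma']
  symm
  refine Finset.sum_nbij' (fun x => Fin.cons x.1.1 x.2)
    (fun π => ⟨(π 0, ∑ i : Fin k, π i.succ), Fin.tail π⟩) ?_ ?_ ?_ ?_ ?_
  · rintro ⟨⟨a, b⟩, π⟩ hx
    simp only [Finset.mem_sigma, Finset.HasAntidiagonal.mem_antidiagonal,
      Finset.Nat.mem_antidiagonalTuple] at hx ⊢
    rw [Fin.sum_cons, hx.2, hx.1]
  · intro π hπ
    simp only [Finset.Nat.mem_antidiagonalTuple] at hπ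
    simp only [Finset.mem_sigma, Finset.HasAntidiagonal.mem_antidiagonal,
      Finset.Nat.mem_antidiagonalTuple]
    constructor
    · rw [← hπ, Fin.sum_univ_succ]
    · simp [Fin.tail]
  · rintro ⟨⟨a, b⟩, π⟩ hx
    simp only [Finset.mem_sigma, Finset.HasAntidiagonal.mem_antidiagonal,
      Finset.Nat.mem_antidiagonalTuple] at hx
    simp [Fin.cons_succ, hx.2]
  · intro π hπ
    exact Fin.cons_self_tail π
  · rintro ⟨⟨a, b⟩, π⟩ hx
    rw [Fin.prod_univ_succ]
    simp [Fin.cons_zero, Fin.cons_succ]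

/-- The truncated generating polynomial of `f` over `ZMod p`. -/
noncomputable def genPoly (f : ℕ → ℕ) (p n : ℕ) : Polynomial (ZMod p) :=
  ∑ m ∈ Finset.range (n + 1), Polynomial.C ((f m : ZMod p)) * Polynomial.X ^ m

lemma coeff_genPoly (f : ℕ → ℕ) (p : ℕ) {m n : ℕ} (h : m ≤ n) :
    (genPoly f p n).coeff m = (f m : ZMod p) := by
  simp only [genPoly, finset_sum_coeff, coeff_C_mul, coeff_X_pow, mul_ite, mul_one, mul_zero]
  rw [Finset.sum_ite_eq, if_pos (Finset.mem_range.2 (Nat.lt_succ_of_le h))]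

lemma coeff_genPoly_pow (f : ℕ → ℕ) (p : ℕ) (n k : ℕ) :
    ∀ m ≤ n, ((genPoly f p n) ^ k).coeff m = (extBinom f k m : ZMod p) := by
  induction k with
  | zero =>
    intro m hm
    simp [extBinom_zero, Polynomial.coeff_one, apply_ite (Nat.cast : ℕ → ZMod p)]
  | succ k ih =>
    intro m hm
    rw [pow_succ', Polynomial.coeff_mul, extBinom_succ]
    push_cast
    refine Finset.sum_congr rfl fun ab hab => ?_
    rw [Finset.HasAntidiagonal.mem_antidiagonal] at hab
    rw [coeff_genPoly f p (le_trans (by omega) hm), ih ab.2 (by omega)]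

lemma pow_pow_eq_expand (p : ℕ) [Fact p.Prime] (Q : Polynomial (ZMod p)) (j : ℕ) :
    Q ^ p ^ j = Polynomial.expand (ZMod p) (p ^ j) Q := by
  have h := Polynomial.map_iterateFrobenius_expand p Q j
  rw [← h]
  ext m
  rw [Polynomial.coeff_map, iterateFrobenius_def, ZMod.pow_card_pow]

theorem extBinom_lucas (p : ℕ) (hp : p.Prime) (f : ℕ → ℕ) (t r : ℕ)
    (nd : Fin (t + 1) → ℕ) (kd : Fin (r + 1) → ℕ)
    (hnd : ∀ i, nd i < p) (hkd : ∀ j, kd j < p)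
    (n k : ℕ)
    (hn : n = ∑ i : Fin (t + 1), nd i * p ^ (i : ℕ)) (hk : k = ∑ j : Fin (r + 1), kd j * p ^ (j : ℕ)) :
    extBinom f k n ≡
      ∑ s ∈ (Fintype.piFinset fun _ : Fin (r + 1) => Finset.range (n + 1)).filter
          (fun s => ∑ i : Fin (r + 1), s i * p ^ (i : ℕ) = n),
        ∏ i, extBinom f (kd i) (s i) [MOD p] := by
  haveI : Fact p.Prime := ⟨hp⟩
  have hp0 : 0 < p := hp.pos
  rw [← ZMod.natCast_eq_natCast_iff]
  push_cast
  set P := genPoly f p n with hP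
  -- Step 1: LHS equals the n-th coefficient of P ^ k
  rw [← coeff_genPoly_pow f p n k n le_rfl]
  -- Step 2: factor P ^ k as a product of expanded powers
  have hfac : P ^ k = ∏ j : Fin (r + 1),
      Polynomial.expand (ZMod p) (p ^ (j : ℕ)) (P ^ kd j) := by
    rw [hk, ← Finset.prod_pow_eq_pow_sum]
    refine Finset.prod_congr rfl fun j _ => ?_
    rw [mul_comm, pow_mul', pow_pow_eq_expand]
  rw [hfac]
  -- Step 3: coefficient of a product, via power series
  have hcoeff : (∏ j : Fin (r + 1),
      Polynomial.expand (ZMod p) (p ^ (j : ℕ)) (P ^ kd j)).coeff n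
      = ∑ l ∈ Finset.finsuppAntidiag (Finset.univ : Finset (Fin (r + 1))) n,
          ∏ j : Fin (r + 1),
            (Polynomial.expand (ZMod p) (p ^ (j : ℕ)) (P ^ kd j)).coeff (l j) := by
    rw [← Polynomial.coeff_coe, ← Polynomial.coeToPowerSeries.ringHom_apply, map_prod,
      PowerSeries.coeff_prod]
    refine Finset.sum_congr rfl fun l _ => Finset.prod_congr rfl fun j _ => ?_
    rw [Polynomial.coeToPowerSeries.ringHom_apply, Polynomial.coeff_coe]
  rw [hcoeff]
  simp_rw [Polynomial.coeff_expand (pow_pos hp0 _)]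
  -- Step 4: discard terms where divisibility fails
  rw [← Finset.sum_filter_of_ne (p := fun l : Fin (r + 1) →₀ ℕ => ∀ j : Fin (r + 1),
      p ^ (j : ℕ) ∣ l j) (fun l _ hne => by
        by_contra h
        obtain ⟨j, hj⟩ := not_forall.mp h
        exact hne (Finset.prod_eq_zero (Finset.mem_univ j) (if_neg hj)))]
  -- Step 5: reindex
  symm
  refine Finset.sum_nbij'
    (fun s => Finsupp.equivFunOnFinite.symm (fun j : Fin (r + 1) => s j * p ^ (j : ℕ)))
    (fun l j => l j / p ^ (j : ℕ)) ?_ ?_ ?_ ?_ ?_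
  · intro s hs
    simp only [Finset.mem_filter, Fintype.mem_piFinset, Finset.mem_range] at hs
    simp only [Finset.mem_filter, Finset.mem_finsuppAntidiag]
    refine ⟨⟨?_, ?_⟩, ?_⟩
    · simpa using hs.2
    · exact Finset.subset_univ _
    · intro j
      simpa using dvd_mul_left (p ^ (j : ℕ)) (s j)
  · intro l hl
    simp only [Finset.mem_filter, Finset.mem_finsuppAntidiag] at hl
    obtain ⟨⟨hsum, -⟩, hdvd⟩ := hl
    simp only [Finset.mem_filter, Fintype.mem_piFinset, Finset.mem_range]
    constructor
    · intro j
      have hle : l j ≤ n := by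
        rw [← hsum]
        exact Finset.single_le_sum (fun i _ => Nat.zero_le _) (Finset.mem_univ j)
      exact Nat.lt_succ_of_le (le_trans (Nat.div_le_self _ _) hle)
    · calc ∑ j : Fin (r + 1), l j / p ^ (j : ℕ) * p ^ (j : ℕ)
          = ∑ j : Fin (r + 1), l j := by
            refine Finset.sum_congr rfl fun j _ => Nat.div_mul_cancel (hdvd j)
        _ = n := hsum
  · intro s hs
    funext j
    simp [Nat.mul_div_cancel _ (pow_pos hp0 (j : ℕ))]
  · intro l hl
    simp only [Finset.mem_filter, Finset.mem_finsuppAntidiag] at hl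
    ext j
    simp [Nat.div_mul_cancel (hl.2 j)]
  · intro s hs
    simp only [Finset.mem_filter, Fintype.mem_piFinset, Finset.mem_range] at hs
    refine Finset.prod_congr rfl fun j _ => ?_
    rw [Finsupp.equivFunOnFinite_symm_apply_apply]
    rw [if_pos (dvd_mul_left _ _), Nat.mul_div_cancel _ (pow_pos hp0 (j : ℕ))]
    exact (coeff_genPoly_pow f p n (kd j) (s j) (Nat.lt_succ_iff.mp (hs.1 j))).symm
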